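/- Let p be a prime. For every g ∈ K_p and every n ≥ 1, the function x ↦ e_n(g⁻¹(x)) − e_n(x) belongs to U_{n−1}, and e_0 ∘ g⁻¹ = e_0. In other words, the natural representation of K_p on the span of the Kaloujnine monomials, given by g · f = f ∘ g⁻¹, is upper uni-triangular in the ordered basis (e_0, e_1, e_2, …). -/

import Mathlib

/-- The triangular-form predicate defining the group `K_p`. -/
def IsTriangular (p : ℕ) (g : Equiv.Perm (ℕ → ZMod p)) : Prop :=
  ∃ a : (n : ℕ) → (Fin n → ZMod p) → ZMod p,
    ∀ (x : ℕ → ZMod p) (n : ℕ), g x n = x n + a n (fun i : Fin n => x (i : ℕ))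

/-- The Kaloujnine monomial `e_n(x) = Π_i x_i^{k_i}`, where `k_0, k_1, …` are the base-`p`
digits of `n` (the digit `k_i = n / p^i % p` vanishes for `i > n`, so the product below
captures all of them). -/
def kalMonomial (p n : ℕ) : (ℕ → ZMod p) → ZMod p :=
  fun x => ∏ i ∈ Finset.range (n + 1), x i ^ (n / p ^ i % p)

/-- `U_n`: the `ZMod p`-linear span of the monomials `e_0, e_1, …, e_n`. -/
def Uspan (p n : ℕ) : Submodule (ZMod p) ((ℕ → ZMod p) → ZMod p) :=
  Submodule.span (ZMod p) (kalMonomial p '' {m : ℕ | m ≤ n})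

namespace KalAux

open Finset

/-- The `i`-th base-`p` digit of `n`. -/
def dgt (p n i : ℕ) : ℕ := n / p ^ i % p

variable {p : ℕ}

lemma dgt_lt (hp : 2 ≤ p) (n i : ℕ) : dgt p n i < p :=
  Nat.mod_lt _ (by omega)

lemma sum_dgt (n M : ℕ) : ∑ i ∈ range M, dgt p n i * p ^ i = n % p ^ M := by
  induction M with
  | zero => simp [Nat.mod_one]
  | succ M ih =>
    rw [Finset.sum_range_succ, ih]
    have h1 : n % p ^ (M + 1) / p ^ M = dgt p n M := by
      rw [pow_succ]
      exact Nat.mod_mul_right_div_self n (p ^ M) p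
    have h2 : n % p ^ (M + 1) % p ^ M = n % p ^ M :=
      Nat.mod_mod_of_dvd n (pow_dvd_pow p (Nat.le_succ M))
    have h3 := Nat.div_add_mod (n % p ^ (M + 1)) (p ^ M)
    rw [h1, h2, mul_comm] at h3
    linarith [h3]

lemma n_lt_pow (hp : 2 ≤ p) (n : ℕ) : n < p ^ (n + 1) :=
  lt_of_lt_of_le (Nat.lt_two_pow_self)
    (le_trans (Nat.pow_le_pow_right (by omega) (Nat.le_succ n))
      (Nat.pow_le_pow_left hp _))

lemma dgt_eq_zero {n i : ℕ} (h : n < p ^ i) : dgt p n i = 0 := by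
  unfold dgt
  rw [Nat.div_eq_of_lt h, Nat.zero_mod]

lemma prod_dgt_ext (hp : 2 ≤ p) {n M1 M2 : ℕ} (h : n < p ^ M1) (hM : M1 ≤ M2)
    (x : ℕ → ZMod p) :
    ∏ i ∈ range M2, x i ^ dgt p n i = ∏ i ∈ range M1, x i ^ dgt p n i := by
  refine (Finset.prod_subset (Finset.range_subset_range.2 hM) ?_).symm
  intro i _ hni
  have hi : M1 ≤ i := by
    by_contra hlt
    exact hni (Finset.mem_range.2 (by omega))
  rw [dgt_eq_zero (lt_of_lt_of_le h (Nat.pow_le_pow_right (by omega) hi)), pow_zero]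

lemma kal_eq_prod (hp : 2 ≤ p) {n M : ℕ} (h : n < p ^ M) (x : ℕ → ZMod p) :
    kalMonomial p n x = ∏ i ∈ range M, x i ^ dgt p n i := by
  have h2 := prod_dgt_ext hp h (le_max_right (n + 1) M) x
  have h3 := prod_dgt_ext hp (n_lt_pow hp n) (le_max_left (n + 1) M) x
  have h0 : kalMonomial p n x = ∏ i ∈ range (n + 1), x i ^ dgt p n i := rfl
  rw [h0, ← h3, h2]

lemma dgt_add (hp : 2 ≤ p) {l b m : ℕ} (hl : l < p ^ m) (hb : p ^ m ∣ b) (i : ℕ) :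
    dgt p (l + b) i = dgt p l i + dgt p b i := by
  rcases lt_or_ge i m with him | him
  · obtain ⟨t, ht⟩ : p ^ i * p ∣ b := dvd_trans (by rw [← pow_succ]; exact pow_dvd_pow p him) hb
    subst ht
    unfold dgt
    have hpos : 0 < p ^ i := Nat.pow_pos (by omega)
    have e1 : (l + p ^ i * p * t) / p ^ i = l / p ^ i + p * t := by
      rw [mul_assoc, Nat.add_mul_div_left _ _ hpos]
    have e2 : (p ^ i * p * t) / p ^ i = p * t := by
      rw [mul_assoc, Nat.mul_div_cancel_left _ hpos]
    rw [e1, e2, Nat.add_mul_mod_self_left, Nat.mul_mod_right, Nat.add_zero]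
  · unfold dgt
    have hple : p ^ m ≤ p ^ i := Nat.pow_le_pow_right (by omega) him
    have hpos : 0 < p ^ i := Nat.pow_pos (by omega)
    have hli : l < p ^ i := lt_of_lt_of_le hl hple
    obtain ⟨q, r, hqr, hrlt, hq, hr⟩ : ∃ q r, p ^ i * q + r = b ∧ r < p ^ i ∧
        q = b / p ^ i ∧ r = b % p ^ i :=
      ⟨b / p ^ i, b % p ^ i, Nat.div_add_mod b (p ^ i), Nat.mod_lt _ hpos, rfl, rfl⟩
    have hdr : p ^ m ∣ r := by
      have hdvd1 : p ^ m ∣ p ^ i * q := dvd_mul_of_dvd_left (pow_dvd_pow p him) q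
      have h7 : p ^ m ∣ p ^ i * q + r := hqr ▸ hb
      exact (Nat.dvd_add_right hdvd1).mp h7
    have hlr : l + r < p ^ i := by
      rcases Nat.eq_zero_or_pos r with h0 | hpos'
      · omega
      · have h4 : p ^ m ∣ p ^ i - r := Nat.dvd_sub (pow_dvd_pow p him) hdr
        have h6 : p ^ m ≤ p ^ i - r := Nat.le_of_dvd (by omega) h4
        omega
    have key : (l + b) / p ^ i = q := by
      have e1 : l + b = l + r + p ^ i * q := by rw [← hqr]; ring
      rw [e1, Nat.add_mul_div_left _ _ hpos, Nat.div_eq_of_lt hlr, Nat.zero_add]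
    rw [key, ← hq, Nat.div_eq_of_lt hli, Nat.zero_mod, Nat.zero_add]

lemma kal_add (hp : 2 ≤ p) {l b m : ℕ} (hl : l < p ^ m) (hb : p ^ m ∣ b)
    (x : ℕ → ZMod p) :
    kalMonomial p (l + b) x = kalMonomial p l x * kalMonomial p b x := by
  have hM : l + b < p ^ (l + b + 1) := n_lt_pow hp _
  have hMl : l < p ^ (l + b + 1) := lt_of_le_of_lt (Nat.le_add_right _ _) hM
  have hMb : b < p ^ (l + b + 1) := lt_of_le_of_lt (Nat.le_add_left _ _) hM
  rw [kal_eq_prod hp hM, kal_eq_prod hp hMl, kal_eq_prod hp hMb, ← Finset.prod_mul_distrib]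
  exact Finset.prod_congr rfl fun i _ => by rw [dgt_add hp hl hb, pow_add]

lemma Uspan_mono {a b : ℕ} (h : a ≤ b) : Uspan p a ≤ Uspan p b :=
  Submodule.span_mono (Set.image_mono fun m hm => le_trans hm h)

lemma kal_mem_Uspan {m n : ℕ} (h : m ≤ n) : kalMonomial p m ∈ Uspan p n :=
  Submodule.subset_span ⟨m, h, rfl⟩

lemma mul_kal_mem (hp : 2 ≤ p) {f : (ℕ → ZMod p) → ZMod p} {b m M : ℕ}
    (hb : p ^ m ∣ b) (hM : p ^ m - 1 + b ≤ M) (hf : f ∈ Uspan p (p ^ m - 1)) :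
    (fun x => f x * kalMonomial p b x) ∈ Uspan p M := by
  induction hf using Submodule.span_induction with
  | mem f hfmem =>
    obtain ⟨l, hl, rfl⟩ := hfmem
    have hl' : l ≤ p ^ m - 1 := hl
    have hlm : l < p ^ m := by
      have : 1 ≤ p ^ m := Nat.one_le_pow _ _ (by omega)
      omega
    have : (fun x => kalMonomial p l x * kalMonomial p b x) = kalMonomial p (l + b) :=
      funext fun x => (kal_add hp hlm hb x).symm
    rw [this]
    exact kal_mem_Uspan (by omega)
  | zero =>
    have : (fun x => (0 : (ℕ → ZMod p) → ZMod p) x * kalMonomial p b x)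
        = (0 : (ℕ → ZMod p) → ZMod p) := funext fun x => by simp
    rw [this]; exact Submodule.zero_mem _
  | add u v hu hv hu' hv' =>
    have : (fun x => (u + v) x * kalMonomial p b x)
        = (fun x => u x * kalMonomial p b x) + fun x => v x * kalMonomial p b x :=
      funext fun x => by simp [add_mul]
    rw [this]; exact Submodule.add_mem _ hu' hv'
  | smul a u hu hu' =>
    have : (fun x => (a • u) x * kalMonomial p b x)
        = a • fun x => u x * kalMonomial p b x :=
      funext fun x => by simp [mul_assoc]
    rw [this]; exact Submodule.smul_mem _ _ hu'

/-- `f` depends only on the coordinates `< m`. -/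
def DOn (p m : ℕ) (f : (ℕ → ZMod p) → ZMod p) : Prop :=
  ∀ x y : ℕ → ZMod p, (∀ i, i < m → x i = y i) → f x = f y

lemma kal_zero_eq_one (x : ℕ → ZMod p) : kalMonomial p 0 x = 1 := by
  simp [kalMonomial]

lemma dgt_mul_pow (hp : 2 ≤ p) {j m : ℕ} (hj : j < p) (i : ℕ) :
    dgt p (j * p ^ m) i = if i = m then j else 0 := by
  rcases lt_trichotomy i m with him | rfl | him
  · have h1 : (j * p ^ m) / p ^ i = j * p ^ (m - i) := by
      rw [Nat.mul_div_assoc j (pow_dvd_pow p him.le), Nat.pow_div him.le (by omega)]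
    unfold dgt
    rw [h1, if_neg (by omega)]
    obtain ⟨s, hs⟩ : p ∣ p ^ (m - i) := dvd_pow_self p (by omega)
    rw [hs, ← mul_assoc, mul_comm j p, mul_assoc, Nat.mul_mod_right]
  · unfold dgt
    rw [Nat.mul_div_cancel _ (Nat.pow_pos (by omega)), if_pos rfl,
      Nat.mod_eq_of_lt hj]
  · unfold dgt
    have : j * p ^ m < p ^ i := by
      calc j * p ^ m ≤ (p - 1) * p ^ m := Nat.mul_le_mul_right _ (by omega)
        _ < p * p ^ m := (Nat.mul_lt_mul_right (Nat.pow_pos (by omega))).2 (by omega)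
        _ = p ^ (m + 1) := by rw [pow_succ, mul_comm]
        _ ≤ p ^ i := Nat.pow_le_pow_right (by omega) him
    rw [Nat.div_eq_of_lt this, Nat.zero_mod, if_neg (by omega)]

lemma rep_dgt (hp : 2 ≤ p) (f : ℕ → ℕ) (hf : ∀ i, f i < p) (N : ℕ) :
    (∑ i ∈ range N, f i * p ^ i) < p ^ N ∧
      ∀ t, t < N → dgt p (∑ i ∈ range N, f i * p ^ i) t = f t := by
  induction N with
  | zero => simp
  | succ N ih =>
    obtain ⟨ihlt, ihd⟩ := ih
    rw [Finset.sum_range_succ]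
    have hdvd : p ^ N ∣ f N * p ^ N := Dvd.intro_left _ rfl
    constructor
    · have h1 : f N * p ^ N ≤ (p - 1) * p ^ N := Nat.mul_le_mul_right _ (by have := hf N; omega)
      have h2 : p ^ (N + 1) = p * p ^ N := by rw [pow_succ, mul_comm]
      have h3 : (p - 1) * p ^ N + p ^ N = p * p ^ N := by
        have : (p - 1) + 1 = p := by omega
        calc (p - 1) * p ^ N + p ^ N = ((p - 1) + 1) * p ^ N := by ring
          _ = p * p ^ N := by rw [this]
      have hpos : 0 < p ^ N := Nat.pow_pos (by omega)
      omega
    · intro t ht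
      rw [dgt_add hp ihlt hdvd t, dgt_mul_pow hp (hf N) t]
      rcases Nat.lt_succ_iff_lt_or_eq.1 ht with h | rfl
      · rw [ihd t h, if_neg (by omega), Nat.add_zero]
      · rw [dgt_eq_zero ihlt, if_pos rfl, Nat.zero_add]

lemma mul_coord_pow_mem (hp : Nat.Prime p) {f : (ℕ → ZMod p) → ZMod p} {m j : ℕ}
    (hj : j < p) (hf : f ∈ Uspan p (p ^ m - 1)) :
    (fun x => f x * (x m) ^ j) ∈ Uspan p (p ^ (m + 1) - 1) := by
  have hp2 := hp.two_le
  have hkal : ∀ x : ℕ → ZMod p, kalMonomial p (j * p ^ m) x = (x m) ^ j := by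
    intro x
    have hlt : j * p ^ m < p ^ (m + 1) := by
      calc j * p ^ m ≤ (p - 1) * p ^ m := Nat.mul_le_mul_right _ (by omega)
        _ < p * p ^ m := (Nat.mul_lt_mul_right (Nat.pow_pos (by omega))).2 (by omega)
        _ = p ^ (m + 1) := by rw [pow_succ, mul_comm]
    rw [kal_eq_prod hp2 hlt, Finset.prod_range_succ]
    have h1 : ∀ i ∈ range m, x i ^ dgt p (j * p ^ m) i = 1 := by
      intro i hi
      rw [dgt_mul_pow hp2 hj, if_neg (by have := Finset.mem_range.1 hi; omega), pow_zero]
    rw [Finset.prod_congr rfl h1, Finset.prod_const_one, one_mul,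
      dgt_mul_pow hp2 hj, if_pos rfl]
  have heq : (fun x => f x * (x m) ^ j) = fun x => f x * kalMonomial p (j * p ^ m) x :=
    funext fun x => by rw [hkal]
  rw [heq]
  refine mul_kal_mem hp2 (Dvd.intro_left _ rfl) ?_ hf
  have h1 : 1 ≤ p ^ m := Nat.one_le_pow _ _ (by omega)
  have h2 : j * p ^ m ≤ (p - 1) * p ^ m := Nat.mul_le_mul_right _ (by omega)
  have h3 : p ^ m + (p - 1) * p ^ m = p ^ (m + 1) := by
    have hpp : p ^ (m + 1) = p * p ^ m := by rw [pow_succ, mul_comm]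
    have : 1 + (p - 1) = p := by omega
    calc p ^ m + (p - 1) * p ^ m = (1 + (p - 1)) * p ^ m := by ring
      _ = p * p ^ m := by rw [this]
      _ = p ^ (m + 1) := hpp.symm
  omega

lemma dOn_mem (hp : Nat.Prime p) {m : ℕ} {f : (ℕ → ZMod p) → ZMod p}
    (hf : DOn p m f) : f ∈ Uspan p (p ^ m - 1) := by
  haveI : Fact (Nat.Prime p) := ⟨hp⟩
  have hp2 := hp.two_le
  induction m generalizing f with
  | zero =>
    have : f = (f fun _ => 0) • kalMonomial p 0 := by
      funext x
      have h1 : f x = f fun _ => 0 := hf x (fun _ => 0) (fun i hi => by omega)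
      rw [h1]
      show _ = (f fun _ => 0) * kalMonomial p 0 x
      rw [kal_zero_eq_one, mul_one]
    rw [this]
    exact Submodule.smul_mem _ _ (kal_mem_Uspan (by norm_num))
  | succ m ih =>
    -- f = ∑ c, (fun x => f (update x m c)) * indicator (x m = c)
    set fc : ZMod p → (ℕ → ZMod p) → ZMod p := fun c x => f (Function.update x m c) with hfc
    have hfcD : ∀ c, DOn p m (fc c) := by
      intro c x y hxy
      apply hf
      intro i hi
      rcases eq_or_ne i m with rfl | hne
      · simp [Function.update_self]
      · rw [Function.update_of_ne hne, Function.update_of_ne hne]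
        exact hxy i (by omega)
    have hfcU : ∀ c, fc c ∈ Uspan p (p ^ m - 1) := fun c => ih (hfcD c)
    have hdecomp : f = ∑ c : ZMod p, fun x => fc c x * (1 - (x m - c) ^ (p - 1)) := by
      funext x
      rw [Finset.sum_apply]
      rw [Finset.sum_eq_single (x m)]
      · have h0 : (0 : ZMod p) ^ (p - 1) = 0 := by
          apply zero_pow; omega
        simp only [fc, sub_self, h0, sub_zero, mul_one, Function.update_eq_self]
      · intro c _ hcne
        have hne : x m - c ≠ 0 := sub_ne_zero.2 (Ne.symm hcne)
        rw [ZMod.pow_card_sub_one_eq_one hne]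
        simp
      · intro h; exact absurd (Finset.mem_univ _) h
    rw [hdecomp]
    refine Submodule.sum_mem _ fun c _ => ?_
    -- expand (x m - c)^(p-1) via add_pow
    have hexp : (fun x => fc c x * (1 - (x m - c) ^ (p - 1)))
        = fc c - ∑ j ∈ range p, ((-c) ^ (p - 1 - j) * ((p - 1).choose j : ZMod p)) •
            fun x => fc c x * (x m) ^ j := by
      funext x
      have hpow : (x m - c) ^ (p - 1)
          = ∑ j ∈ range p, (x m) ^ j * (-c) ^ (p - 1 - j) * ((p - 1).choose j : ZMod p) := by
        have h1 : x m - c = x m + (-c) := by ring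
        rw [h1, add_pow]
        have h2 : p - 1 + 1 = p := by omega
        rw [h2]
      simp only [Pi.sub_apply, Finset.sum_apply, Pi.smul_apply, smul_eq_mul]
      rw [hpow, mul_sub, mul_one, Finset.mul_sum]
      congr 1
      refine Finset.sum_congr rfl fun j _ => ?_
      ring
    rw [hexp]
    refine Submodule.sub_mem _ ?_ ?_
    · exact Uspan_mono (by
        have h1 : p ^ m ≤ p ^ (m + 1) := Nat.pow_le_pow_right (by omega) (Nat.le_succ m)
        omega) (hfcU c)
    · refine Submodule.sum_mem _ fun j hj => ?_
      exact Submodule.smul_mem _ _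
        (mul_coord_pow_mem hp (Finset.mem_range.1 hj) (hfcU c))

lemma exists_inv_tableau {g : Equiv.Perm (ℕ → ZMod p)} (hg : IsTriangular p g) :
    ∃ c : ℕ → (ℕ → ZMod p) → ZMod p,
      (∀ n, DOn p n (c n)) ∧ ∀ (x : ℕ → ZMod p) (n : ℕ), g.symm x n = x n + c n x := by
  obtain ⟨a, ha⟩ := hg
  have hA : ∀ (x : ℕ → ZMod p) (n : ℕ),
      g.symm x n = x n - a n (fun i : Fin n => g.symm x (i : ℕ)) := by
    intro x n
    have h := ha (g.symm x) n
    rw [Equiv.apply_symm_apply] at h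
    rw [h]; ring
  have hP : ∀ n : ℕ, ∀ x y : ℕ → ZMod p, (∀ i, i ≤ n → x i = y i) →
      g.symm x n = g.symm y n := by
    intro n
    induction n using Nat.strong_induction_on with
    | _ n ih =>
      intro x y hxy
      have hfun : (fun i : Fin n => g.symm x (i : ℕ)) = fun i : Fin n => g.symm y (i : ℕ) :=
        funext fun i => ih i i.isLt x y fun j hj => hxy j (le_trans hj (Nat.le_of_lt i.isLt))
      rw [hA, hA, hfun, hxy n le_rfl]
  refine ⟨fun n x => - a n (fun i : Fin n => g.symm x (i : ℕ)), ?_, ?_⟩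
  · intro n x y hxy
    have hfun : (fun i : Fin n => g.symm x (i : ℕ)) = fun i : Fin n => g.symm y (i : ℕ) :=
      funext fun i => hP i x y fun j hj => hxy j (lt_of_le_of_lt hj i.isLt)
    show -a n (fun i : Fin n => g.symm x (i : ℕ)) = -a n fun i : Fin n => g.symm y (i : ℕ)
    rw [hfun]
  · intro x n
    rw [hA]; ring

end KalAux

/-- for every `g ∈ K_p` and `n ≥ 1`, `e_n ∘ g⁻¹ − e_n ∈ U_{n−1}`, and
`e_0 ∘ g⁻¹ = e_0`; i.e. the natural representation `g · f = f ∘ g⁻¹` of `K_p` is upper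
uni-triangular in the ordered basis `(e_0, e_1, e_2, …)`. -/
theorem kalMonomial_unitriangular (p : ℕ) (hp : p.Prime)
    (g : Equiv.Perm (ℕ → ZMod p)) (hg : IsTriangular p g) :
    (∀ n : ℕ, 1 ≤ n →
      (fun x => kalMonomial p n (g.symm x) - kalMonomial p n x) ∈ Uspan p (n - 1)) ∧
    (fun x => kalMonomial p 0 (g.symm x)) = kalMonomial p 0 := by
  classical
  have hp2 := hp.two_le
  obtain ⟨c, hcD, hc⟩ := KalAux.exists_inv_tableau hg
  open Finset KalAux in
  constructor
  · intro n hn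
    set k : ℕ → ℕ := fun i => dgt p n i with hkdef
    set N := n + 1 with hN
    have hkp : ∀ i, k i < p := fun i => dgt_lt hp2 n i
    set F : ℕ → (ℕ → ZMod p) → ZMod p := fun m x =>
      (∏ i ∈ range m, (x i + c i x) ^ k i) * ∏ i ∈ Ico m N, x i ^ k i with hF
    have hFN : ∀ x, kalMonomial p n (g.symm x) = F N x := by
      intro x
      have h1 : kalMonomial p n (g.symm x) = ∏ i ∈ range N, (g.symm x i) ^ k i := rfl
      rw [h1]
      have h2 : F N x = ∏ i ∈ range N, (x i + c i x) ^ k i := by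
        simp [hF, Finset.Ico_self]
      rw [h2]
      exact Finset.prod_congr rfl fun i _ => by rw [hc x i]
    have hF0 : ∀ x, kalMonomial p n x = F 0 x := by
      intro x
      show kalMonomial p n x = (∏ i ∈ range 0, (x i + c i x) ^ k i) * ∏ i ∈ Ico 0 N, x i ^ k i
      rw [Finset.range_zero, Finset.prod_empty, one_mul, Nat.Ico_zero_eq_range]
      rfl
    -- the digit-sum identity
    have hn_lt : n < p ^ N := n_lt_pow hp2 n
    have hn_eq : ∑ i ∈ range N, k i * p ^ i = n := by
      have := sum_dgt (p := p) n N
      rwa [Nat.mod_eq_of_lt hn_lt] at this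
    -- key step
    have hstep : ∀ m, m < N → (fun x => F (m + 1) x - F m x) ∈ Uspan p (n - 1) := by
      intro m hm
      set b : ℕ → ℕ := fun j => j * p ^ m + ∑ i ∈ Ico (m + 1) N, k i * p ^ i with hb
      set D : ℕ → (ℕ → ZMod p) → ZMod p := fun j x =>
        (∏ i ∈ range m, (x i + c i x) ^ k i) * (c m x) ^ (k m - j) *
          ((k m).choose j : ZMod p) with hD
      -- the difference as a sum of terms
      have hdiff : (fun x => F (m + 1) x - F m x)
          = ∑ j ∈ range (k m), fun x => D j x * ((x m) ^ j * ∏ i ∈ Ico (m + 1) N, x i ^ k i) := by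
        funext x
        rw [Finset.sum_apply]
        have hFm1 : F (m + 1) x = (∏ i ∈ range m, (x i + c i x) ^ k i) *
            (x m + c m x) ^ k m * ∏ i ∈ Ico (m + 1) N, x i ^ k i := by
          rw [hF]
          simp only
          rw [Finset.prod_range_succ]
        have hFm : F m x = (∏ i ∈ range m, (x i + c i x) ^ k i) *
            ((x m) ^ k m * ∏ i ∈ Ico (m + 1) N, x i ^ k i) := by
          rw [hF]
          simp only
          rw [Finset.prod_eq_prod_Ico_succ_bot hm]
        rw [hFm1, hFm]
        have hpow : (x m + c m x) ^ k m
            = (∑ j ∈ range (k m), (x m) ^ j * (c m x) ^ (k m - j) * ((k m).choose j : ZMod p))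
              + (x m) ^ k m := by
          rw [add_pow, Finset.sum_range_succ]
          simp
        have expand : (∏ i ∈ range m, (x i + c i x) ^ k i) *
            (∑ j ∈ range (k m), (x m) ^ j * (c m x) ^ (k m - j) * ((k m).choose j : ZMod p)) *
            (∏ i ∈ Ico (m + 1) N, x i ^ k i)
            = ∑ j ∈ range (k m), D j x * ((x m) ^ j * ∏ i ∈ Ico (m + 1) N, x i ^ k i) := by
          rw [Finset.mul_sum, Finset.sum_mul]
          refine Finset.sum_congr rfl fun j _ => ?_
          simp only [hD]
          ring
        rw [hpow, ← expand]
        ring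
      rw [hdiff]
      refine Submodule.sum_mem _ fun j hj => ?_
      have hjk : j < k m := Finset.mem_range.1 hj
      have hjp : j < p := lt_trans hjk (hkp m)
      -- the monomial equals kalMonomial p (b j)
      set fj : ℕ → ℕ := fun i => if i = m then j else if m + 1 ≤ i then k i else 0 with hfj
      have hfjp : ∀ i, fj i < p := by
        intro i
        simp only [hfj]
        split_ifs
        · exact hjp
        · exact hkp i
        · omega
      have hsum_fj : ∑ i ∈ range N, fj i * p ^ i = b j := by
        rw [← Finset.sum_range_add_sum_Ico _ (show m + 1 ≤ N by omega)]
        have h1 : ∑ i ∈ range (m + 1), fj i * p ^ i = j * p ^ m := by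
          rw [Finset.sum_range_succ]
          have h2 : ∀ i ∈ range m, fj i * p ^ i = 0 := by
            intro i hi
            have him := Finset.mem_range.1 hi
            simp only [hfj]
            rw [if_neg (by omega), if_neg (by omega), Nat.zero_mul]
          rw [Finset.sum_congr rfl h2, Finset.sum_const_zero, Nat.zero_add]
          simp only [hfj]; simp
        have h3 : ∑ i ∈ Ico (m + 1) N, fj i * p ^ i = ∑ i ∈ Ico (m + 1) N, k i * p ^ i := by
          refine Finset.sum_congr rfl fun i hi => ?_
          have := Finset.mem_Ico.1 hi
          simp only [hfj]
          rw [if_neg (by omega), if_pos (by omega)]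
        rw [h1, h3]
      obtain ⟨hbj_lt, hbj_dgt⟩ := rep_dgt hp2 fj hfjp N
      rw [hsum_fj] at hbj_lt hbj_dgt
      have hkalb : ∀ x : ℕ → ZMod p,
          kalMonomial p (b j) x = (x m) ^ j * ∏ i ∈ Ico (m + 1) N, x i ^ k i := by
        intro x
        rw [kal_eq_prod hp2 hbj_lt x]
        rw [← Finset.prod_range_mul_prod_Ico _ (show m + 1 ≤ N by omega)]
        have h1 : ∏ i ∈ range (m + 1), x i ^ dgt p (b j) i = (x m) ^ j := by
          rw [Finset.prod_range_succ]
          have h2 : ∀ i ∈ range m, x i ^ dgt p (b j) i = 1 := by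
            intro i hi
            have him := Finset.mem_range.1 hi
            rw [hbj_dgt i (by omega), hfj]
            simp only
            rw [if_neg (by omega), if_neg (by omega), pow_zero]
          rw [Finset.prod_congr rfl h2, Finset.prod_const_one, one_mul,
            hbj_dgt m (by omega)]
          simp only [hfj]; simp
        have h3 : ∏ i ∈ Ico (m + 1) N, x i ^ dgt p (b j) i
            = ∏ i ∈ Ico (m + 1) N, x i ^ k i := by
          refine Finset.prod_congr rfl fun i hi => ?_
          have hii := Finset.mem_Ico.1 hi
          rw [hbj_dgt i (by omega)]
          simp only [hfj]
          rw [if_neg (by omega), if_pos (by omega)]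
        rw [h1, h3]
      have hterm : (fun x => D j x * ((x m) ^ j * ∏ i ∈ Ico (m + 1) N, x i ^ k i))
          = fun x => D j x * kalMonomial p (b j) x := by
        funext x; rw [hkalb x]
      rw [hterm]
      -- D j depends only on coordinates < m
      have hDdep : KalAux.DOn p m (D j) := by
        intro x y hxy
        simp only [hD]
        have h1 : ∏ i ∈ range m, (x i + c i x) ^ k i
            = ∏ i ∈ range m, (y i + c i y) ^ k i := by
          refine Finset.prod_congr rfl fun i hi => ?_
          have him := Finset.mem_range.1 hi
          rw [hxy i him, hcD i x y fun l hl => hxy l (by omega)]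
        rw [h1, hcD m x y hxy]
      have hDmem : D j ∈ Uspan p (p ^ m - 1) := dOn_mem hp hDdep
      -- divisibility and bound
      have hdvd : p ^ m ∣ b j := by
        rw [hb]
        refine Nat.dvd_add (Dvd.intro_left _ rfl) (Finset.dvd_sum fun i hi => ?_)
        have := Finset.mem_Ico.1 hi
        exact dvd_mul_of_dvd_right (pow_dvd_pow p (by omega)) _
      have hbound : p ^ m - 1 + b j ≤ n - 1 := by
        have hsplit : ∑ i ∈ range (m + 1), k i * p ^ i + ∑ i ∈ Ico (m + 1) N, k i * p ^ i
            = ∑ i ∈ range N, k i * p ^ i :=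
          Finset.sum_range_add_sum_Ico _ (by omega)
        have h2 : k m * p ^ m ≤ ∑ i ∈ range (m + 1), k i * p ^ i := by
          rw [Finset.sum_range_succ]
          exact Nat.le_add_left _ _
        have h3 : (j + 1) * p ^ m ≤ k m * p ^ m := Nat.mul_le_mul_right _ (by omega)
        have h4 : (j + 1) * p ^ m = j * p ^ m + p ^ m := by ring
        have h5 : 1 ≤ p ^ m := Nat.one_le_pow _ _ (by omega)
        have hkey : p ^ m + b j ≤ n := by
          simp only [hb]
          rw [← hn_eq, ← hsplit]
          have h6 : p ^ m + j * p ^ m ≤ k m * p ^ m := by omega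
          omega
        omega
      exact mul_kal_mem hp2 hdvd hbound hDmem
    -- telescoping
    have htel : ∀ m, m ≤ N → (fun x => F m x - F 0 x) ∈ Uspan p (n - 1) := by
      intro m hm
      induction m with
      | zero =>
        have : (fun x => F 0 x - F 0 x) = (0 : (ℕ → ZMod p) → ZMod p) :=
          funext fun x => by simp
        rw [this]; exact Submodule.zero_mem _
      | succ m ih =>
        have h1 := ih (by omega)
        have h2 := hstep m (by omega)
        have h3 : (fun x => F (m + 1) x - F 0 x)
            = (fun x => F (m + 1) x - F m x) + fun x => F m x - F 0 x := by
          funext x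
          show _ = (F (m + 1) x - F m x) + (F m x - F 0 x)
          ring
        rw [h3]
        exact Submodule.add_mem _ h2 h1
    have hfinal := htel N le_rfl
    have heq : (fun x => kalMonomial p n (g.symm x) - kalMonomial p n x)
        = fun x => F N x - F 0 x := funext fun x => by rw [hFN x, hF0 x]
    rwa [heq]
  · funext x
    show kalMonomial p 0 (g.symm x) = kalMonomial p 0 x
    rw [KalAux.kal_zero_eq_one, KalAux.kal_zero_eq_one]
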